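/- Let d ≥ 1, q ≥ 1 and let ζ : ℝ^d → ℝ^q be twice continuously differentiable. Let x ∈ ℝ^d be a point at which the Gram matrix G(x) = g(x)^T g(x) is invertible (hence G is invertible on a neighborhood of x). Then the gradient of the function y ↦ ln det G(y) at x satisfies ∇(ln det G)(x) = 2 Σ_{i=1}^d g'(x)(e_i) G(x)^{-1} g(x)^T e_i. -/

import Mathlib

open Matrix

variable {d q : ℕ}

theorem aux_contDiff (ζ : EuclideanSpace ℝ (Fin d) → EuclideanSpace ℝ (Fin q))
    (hζ : ContDiff ℝ 2 ζ) (k : Fin d) (j : Fin q) :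
    ContDiff ℝ 1 (fun y => fderiv ℝ ζ y (EuclideanSpace.single k 1) j) := by
  have h1 : ContDiff ℝ 1 (fderiv ℝ ζ) := hζ.fderiv_right (by norm_num)
  have h2 : ContDiff ℝ 1 (fun y => (fderiv ℝ ζ y) (EuclideanSpace.single k 1)) :=
    h1.clm_apply contDiff_const
  exact contDiff_euclidean.mp h2 j

theorem aux_fderiv_eq (ζ : EuclideanSpace ℝ (Fin d) → EuclideanSpace ℝ (Fin q))
    (hζ : ContDiff ℝ 2 ζ) (x : EuclideanSpace ℝ (Fin d)) (k : Fin d) (j : Fin q)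
    (v : EuclideanSpace ℝ (Fin d)) :
    fderiv ℝ (fun y => fderiv ℝ ζ y (EuclideanSpace.single k 1) j) x v
      = fderiv ℝ (fderiv ℝ ζ) x v (EuclideanSpace.single k 1) j := by
  have h1 : ContDiff ℝ 1 (fderiv ℝ ζ) := hζ.fderiv_right (by norm_num)
  have hdf : DifferentiableAt ℝ (fderiv ℝ ζ) x := (h1.differentiable one_ne_zero) x
  set T := ((EuclideanSpace.proj j : EuclideanSpace ℝ (Fin q) →L[ℝ] ℝ)).comp
      (ContinuousLinearMap.apply ℝ (EuclideanSpace ℝ (Fin q))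
        (EuclideanSpace.single k 1 : EuclideanSpace ℝ (Fin d))) with hT
  have h2 : HasFDerivAt (fun y => fderiv ℝ ζ y (EuclideanSpace.single k 1) j)
      (T.comp (fderiv ℝ (fderiv ℝ ζ) x)) x := T.hasFDerivAt.comp x hdf.hasFDerivAt
  rw [h2.fderiv]; rfl

theorem aux_symm (ζ : EuclideanSpace ℝ (Fin d) → EuclideanSpace ℝ (Fin q))
    (hζ : ContDiff ℝ 2 ζ) (x v w : EuclideanSpace ℝ (Fin d)) :
    fderiv ℝ (fderiv ℝ ζ) x v w = fderiv ℝ (fderiv ℝ ζ) x w v := by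
  have h1 : ContDiff ℝ 1 (fderiv ℝ ζ) := hζ.fderiv_right (by norm_num)
  exact second_derivative_symmetric
    (fun y => ((hζ.differentiable (by norm_num)) y).hasFDerivAt)
    ((h1.differentiable one_ne_zero x).hasFDerivAt) v w

theorem aux_sum {d q : ℕ} (w : Matrix (Fin q) (Fin q) ℝ) (hw : ∀ a b, w a b = w b a)
    (A C : Matrix (Fin d) (Fin q) ℝ) :
    ∑ a : Fin q, ∑ r : Fin q, w a r * (∑ k : Fin d, (A k r * C k a + A k a * C k r))
      = 2 * ∑ k : Fin d, ∑ a : Fin q, C k a * (∑ r : Fin q, w a r * A k r) := by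
  have e1 : ∑ a : Fin q, ∑ r : Fin q, w a r * (∑ k : Fin d, (A k r * C k a + A k a * C k r))
      = (∑ a : Fin q, ∑ r : Fin q, ∑ k : Fin d, w a r * (A k r * C k a))
        + ∑ a : Fin q, ∑ r : Fin q, ∑ k : Fin d, w a r * (A k a * C k r) := by
    rw [← Finset.sum_add_distrib]
    refine Finset.sum_congr rfl fun a _ => ?_
    rw [← Finset.sum_add_distrib]
    refine Finset.sum_congr rfl fun r _ => ?_
    rw [← Finset.sum_add_distrib, Finset.mul_sum]
    exact Finset.sum_congr rfl fun k _ => by ring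
  have e2 : ∑ a : Fin q, ∑ r : Fin q, ∑ k : Fin d, w a r * (A k a * C k r)
      = ∑ a : Fin q, ∑ r : Fin q, ∑ k : Fin d, w a r * (A k r * C k a) := by
    rw [Finset.sum_comm]
    refine Finset.sum_congr rfl fun a _ => Finset.sum_congr rfl fun r _ =>
      Finset.sum_congr rfl fun k _ => ?_
    rw [hw a r]
  have e3 : ∑ a : Fin q, ∑ r : Fin q, ∑ k : Fin d, w a r * (A k r * C k a)
      = ∑ k : Fin d, ∑ a : Fin q, C k a * (∑ r : Fin q, w a r * A k r) := by
    calc ∑ a : Fin q, ∑ r : Fin q, ∑ k : Fin d, w a r * (A k r * C k a)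
        = ∑ a : Fin q, ∑ k : Fin d, ∑ r : Fin q, w a r * (A k r * C k a) :=
          Finset.sum_congr rfl fun a _ => Finset.sum_comm
      _ = ∑ k : Fin d, ∑ a : Fin q, ∑ r : Fin q, w a r * (A k r * C k a) := Finset.sum_comm
      _ = ∑ k : Fin d, ∑ a : Fin q, C k a * ∑ r : Fin q, w a r * A k r := by
          refine Finset.sum_congr rfl fun k _ => Finset.sum_congr rfl fun a _ => ?_
          rw [Finset.mul_sum]
          exact Finset.sum_congr rfl fun r _ => by ring
  rw [e1, e2, e3]; ring


/-- Let `ζ : ℝ^d → ℝ^q` be `C²` with `g = ∇ζ` (transpose Jacobian,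
`g(x)_{ij} = ∂ζ_j/∂x_i`) and Gram matrix `G = gᵀ g`. If `G(x)` is invertible, then
`∇(ln det G)(x) = 2 Σ_{i=1}^d g'(x)(e_i) G(x)⁻¹ g(x)ᵀ e_i`, where `g'(x)(v)` is the
directional derivative of `g` at `x` in direction `v`. -/
theorem gradient_log_det_gram (d q : ℕ) (hd : 1 ≤ d) (hq : 1 ≤ q)
    (ζ : EuclideanSpace ℝ (Fin d) → EuclideanSpace ℝ (Fin q))
    (hζ : ContDiff ℝ 2 ζ)
    (g : EuclideanSpace ℝ (Fin d) → Matrix (Fin d) (Fin q) ℝ)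
    (hg : ∀ x i j, g x i j = fderiv ℝ ζ x (EuclideanSpace.single i 1) j)
    (g' : EuclideanSpace ℝ (Fin d) → EuclideanSpace ℝ (Fin d) →
      Matrix (Fin d) (Fin q) ℝ)
    (hg' : ∀ x v k j, g' x v k j = fderiv ℝ (fun y => g y k j) x v)
    (x : EuclideanSpace ℝ (Fin d)) (hG : IsUnit ((g x)ᵀ * g x)) :
    gradient (fun y => Real.log ((g y)ᵀ * g y).det) x
      = (2:ℝ) • (WithLp.equiv 2 (Fin d → ℝ)).symm
          (∑ i : Fin d, (g' x (EuclideanSpace.single i 1)).mulVec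
            (((g x)ᵀ * g x)⁻¹.mulVec ((g x)ᵀ.mulVec (Pi.single i 1)))) := by
  classical
  have hgfun : ∀ k j, (fun y => g y k j)
      = fun y => fderiv ℝ ζ y (EuclideanSpace.single k 1) j := by
    intro k j; funext y; exact hg y k j
  have hgc : ∀ k j, ContDiff ℝ 1 (fun y => g y k j) := by
    intro k j; rw [hgfun]; exact aux_contDiff ζ hζ k j
  set Gx := (g x)ᵀ * g x with hGx
  have hdet : Gx.det ≠ 0 := ((Matrix.isUnit_iff_isUnit_det Gx).mp hG).ne_zero
  set ℓ : Fin d → Fin q → (EuclideanSpace ℝ (Fin d) →L[ℝ] ℝ) :=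
    fun k j => fderiv ℝ (fun y => g y k j) x with hℓ
  have hder : ∀ k j, HasFDerivAt (fun y => g y k j) (ℓ k j) x :=
    fun k j => (((hgc k j).differentiable one_ne_zero) x).hasFDerivAt
  set L : Fin q → Fin q → (EuclideanSpace ℝ (Fin d) →L[ℝ] ℝ) :=
    fun r b => ∑ k, (g x k r • ℓ k b + g x k b • ℓ k r) with hL
  have hGab : ∀ r b, HasFDerivAt (fun y => ((g y)ᵀ * g y) r b) (L r b) x := by
    intro r b
    have e : (fun y => ((g y)ᵀ * g y) r b) = fun y => ∑ k, g y k r * g y k b := by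
      funext y; simp [Matrix.mul_apply, Matrix.transpose_apply]
    rw [e]
    exact HasFDerivAt.fun_sum fun k _ => (hder k r).mul (hder k b)
  set D : EuclideanSpace ℝ (Fin d) →L[ℝ] ℝ :=
    ∑ σ : Equiv.Perm (Fin q), ((Equiv.Perm.sign σ : ℤ) : ℝ) •
      (∑ a, (∏ a' ∈ Finset.univ.erase a, Gx (σ a') a') • L (σ a) a) with hD
  have hdetG : HasFDerivAt (fun y => ((g y)ᵀ * g y).det) D x := by
    have e : (fun y => ((g y)ᵀ * g y).det)
        = fun y => ∑ σ : Equiv.Perm (Fin q),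
            ((Equiv.Perm.sign σ : ℤ) : ℝ) * ∏ a, ((g y)ᵀ * g y) (σ a) a := by
      funext y; rw [Matrix.det_apply]; simp [Units.smul_def, zsmul_eq_mul]
    rw [e]
    exact HasFDerivAt.fun_sum fun σ _ =>
      (HasFDerivAt.finset_prod (fun a _ => hGab (σ a) a)).const_mul _
  have hlog : HasFDerivAt (fun y => Real.log ((g y)ᵀ * g y).det)
      ((Gx.det)⁻¹ • D) x := (Real.hasDerivAt_log hdet).comp_hasFDerivAt (f := fun y => ((g y)ᵀ * g y).det) x hdetG
  -- directional derivatives of g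
  set B : Fin d → Matrix (Fin d) (Fin q) ℝ :=
    fun i => g' x (EuclideanSpace.single i 1) with hB
  have hBval : ∀ i k j, B i k j = ℓ k j (EuclideanSpace.single i 1) := by
    intro i k j; rw [hB]; exact hg' x _ k j
  have hsymB : ∀ i k j, B i k j = B k i j := by
    intro i k j
    rw [hBval, hBval, hℓ]
    simp only [hgfun]
    rw [aux_fderiv_eq ζ hζ x k j _, aux_fderiv_eq ζ hζ x i j _,
      aux_symm ζ hζ x]
  -- symmetry of Gx⁻¹
  have hGsymm : ∀ a b, Gx⁻¹ a b = Gx⁻¹ b a := by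
    intro a b
    have h1 : Gxᵀ = Gx := by rw [hGx]; rw [Matrix.transpose_mul, Matrix.transpose_transpose]
    have h2 : Gx⁻¹ᵀ = Gx⁻¹ := by rw [Matrix.transpose_nonsing_inv, h1]
    conv_lhs => rw [← h2]
    rfl
  -- key determinant identity
  have key : ∀ H : Matrix (Fin q) (Fin q) ℝ,
      (∑ σ : Equiv.Perm (Fin q), ((Equiv.Perm.sign σ : ℤ) : ℝ) *
          ∑ a, (∏ a' ∈ Finset.univ.erase a, Gx (σ a') a') * H (σ a) a)
        = ∑ a, (Gx.adjugate *ᵥ fun r => H r a) a := by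
    intro H
    simp_rw [Finset.mul_sum]
    rw [Finset.sum_comm]
    refine Finset.sum_congr rfl fun a _ => ?_
    rw [← Matrix.cramer_eq_adjugate_mulVec, Matrix.cramer_apply, Matrix.det_apply]
    refine Finset.sum_congr rfl fun σ _ => ?_
    rw [Units.smul_def, zsmul_eq_mul]
    congr 1
    rw [← Finset.mul_prod_erase Finset.univ _ (Finset.mem_univ a),
      Matrix.updateCol_self, mul_comm]
    congr 1
    exact Finset.prod_congr rfl fun a' ha' =>
      (Matrix.updateCol_ne (Finset.ne_of_mem_erase ha')).symm
  -- finish componentwise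
  apply (WithLp.equiv 2 (Fin d → ℝ)).injective
  funext i
  have hgradi : (WithLp.equiv 2 (Fin d → ℝ)) (gradient (fun y => Real.log ((g y)ᵀ * g y).det) x) i
      = fderiv ℝ (fun y => Real.log ((g y)ᵀ * g y).det) x (EuclideanSpace.single i 1) := by
    have h1 : (inner ℝ (gradient (fun y => Real.log ((g y)ᵀ * g y).det) x)
          (EuclideanSpace.single i (1:ℝ)) : ℝ)
        = fderiv ℝ (fun y => Real.log ((g y)ᵀ * g y).det) x (EuclideanSpace.single i 1) :=
      InnerProductSpace.toDual_symm_apply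
    rw [← h1, EuclideanSpace.inner_single_right]
    simp [WithLp.equiv]
  rw [hgradi, hlog.fderiv]
  set H : Matrix (Fin q) (Fin q) ℝ :=
    fun r b => ∑ k, (g x k r * B i k b + g x k b * B i k r) with hH
  have hLH : ∀ r b, L r b (EuclideanSpace.single i 1) = H r b := by
    intro r b
    simp only [hL, hH, ContinuousLinearMap.sum_apply, ContinuousLinearMap.add_apply,
      ContinuousLinearMap.smul_apply, smul_eq_mul]
    exact Finset.sum_congr rfl fun k _ => by rw [hBval i k b, hBval i k r]
  have hD1 : D (EuclideanSpace.single i 1)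
      = ∑ σ : Equiv.Perm (Fin q), ((Equiv.Perm.sign σ : ℤ) : ℝ) *
          ∑ a, (∏ a' ∈ Finset.univ.erase a, Gx (σ a') a') * H (σ a) a := by
    simp only [hD, ContinuousLinearMap.sum_apply, ContinuousLinearMap.smul_apply,
      smul_eq_mul, hLH]
  have lhs1 : (Gx.det⁻¹ • D) (EuclideanSpace.single i (1:ℝ))
      = Gx.det⁻¹ * D (EuclideanSpace.single i 1) := rfl
  rw [lhs1, hD1, key H]
  have inv1 : ∀ (c : Fin q → ℝ) (a : Fin q),
      (Gx⁻¹ *ᵥ c) a = Gx.det⁻¹ * (Gx.adjugate *ᵥ c) a := by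
    intro c a
    rw [Matrix.inv_def, Ring.inverse_eq_inv, Matrix.smul_mulVec]
    simp [smul_eq_mul]
  have lhs2 : Gx.det⁻¹ * ∑ a, (Gx.adjugate *ᵥ fun r => H r a) a
      = ∑ a, (Gx⁻¹ *ᵥ fun r => H r a) a := by
    rw [Finset.mul_sum]
    exact Finset.sum_congr rfl fun a _ => (inv1 _ a).symm
  rw [lhs2]
  have hRHS : (WithLp.equiv 2 (Fin d → ℝ)) ((2:ℝ) • (WithLp.equiv 2 (Fin d → ℝ)).symm
        (∑ i' : Fin d, g' x (EuclideanSpace.single i' 1) *ᵥ Gx⁻¹ *ᵥ (g x)ᵀ *ᵥ Pi.single i' 1)) i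
      = 2 * ∑ i' : Fin d, (g' x (EuclideanSpace.single i' 1) *ᵥ Gx⁻¹ *ᵥ (g x)ᵀ *ᵥ Pi.single i' 1) i := by
    have e : ((WithLp.equiv 2 (Fin d → ℝ)) ((2:ℝ) • (WithLp.equiv 2 (Fin d → ℝ)).symm
        (∑ i' : Fin d, g' x (EuclideanSpace.single i' 1) *ᵥ Gx⁻¹ *ᵥ (g x)ᵀ *ᵥ Pi.single i' 1)) i)
        = 2 * (∑ i' : Fin d, g' x (EuclideanSpace.single i' 1) *ᵥ Gx⁻¹ *ᵥ (g x)ᵀ *ᵥ Pi.single i' 1) i := rfl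
    rw [e, Finset.sum_apply]
  rw [hRHS]
  have collapse : ∀ i' : Fin d, (g x)ᵀ *ᵥ Pi.single i' 1 = fun b => g x i' b := by
    intro i'
    funext b
    simp [Matrix.mulVec, dotProduct, Matrix.transpose_apply, Pi.single_apply]
  have expandR : ∀ i' : Fin d,
      (g' x (EuclideanSpace.single i' 1) *ᵥ Gx⁻¹ *ᵥ (g x)ᵀ *ᵥ Pi.single i' 1) i
        = ∑ a, B i i' a * ∑ r, Gx⁻¹ a r * g x i' r := by
    intro i'
    have hBi : g' x (EuclideanSpace.single i' 1) = B i' := rfl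
    rw [collapse, hBi]
    simp only [Matrix.mulVec, dotProduct]
    exact Finset.sum_congr rfl fun a _ => by rw [hsymB i' i a]
  have expandL : ∀ a : Fin q, (Gx⁻¹ *ᵥ fun r => H r a) a
      = ∑ r, Gx⁻¹ a r * (∑ k, (g x k r * B i k a + g x k a * B i k r)) := by
    intro a
    simp only [Matrix.mulVec, dotProduct, hH]
  calc ∑ a, (Gx⁻¹ *ᵥ fun r => H r a) a
      = ∑ a, ∑ r, Gx⁻¹ a r * (∑ k, (g x k r * B i k a + g x k a * B i k r)) :=
        Finset.sum_congr rfl fun a _ => expandL a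
    _ = 2 * ∑ k, ∑ a, B i k a * (∑ r, Gx⁻¹ a r * g x k r) :=
        aux_sum Gx⁻¹ hGsymm (g x) (fun k a => B i k a)
    _ = 2 * ∑ i' : Fin d, (g' x (EuclideanSpace.single i' 1) *ᵥ Gx⁻¹ *ᵥ (g x)ᵀ *ᵥ Pi.single i' 1) i := by
        congr 1
        exact Finset.sum_congr rfl fun i' _ => (expandR i').symm
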